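/- A distance graph G of a finite sequence of points in ℝ^d, each at Euclidean distance at most √3/4 from a fixed line, is a perfect graph. -/

import Mathlib

open SimpleGraph

section DilworthMachinery

open Finset

variable {V : Type*} [DecidableEq V]

open Classical in
/-- max size of a clique inside the finset `s` -/
noncomputable def fcw (G : SimpleGraph V) (s : Finset V) : ℕ :=
  s.powerset.sup fun Q : Finset V => if G.IsClique (Q : Set V) then Q.card else 0

lemma le_fcw {G : SimpleGraph V} {Q s : Finset V} (hQs : Q ⊆ s)
    (hc : G.IsClique (Q : Set V)) : Q.card ≤ fcw G s := by
  classical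
  have := Finset.le_sup (f := fun Q : Finset V => if G.IsClique (Q : Set V) then Q.card else 0)
    (Finset.mem_powerset.mpr hQs)
  simp only [if_pos hc] at this
  exact this

lemma fcw_mono {G : SimpleGraph V} {s u : Finset V} (h : s ⊆ u) : fcw G s ≤ fcw G u := by
  classical
  apply Finset.sup_le
  intro Q hQ
  rw [Finset.mem_powerset] at hQ
  by_cases hc : G.IsClique (Q : Set V)
  · simpa [hc] using le_fcw (hQ.trans h) hc
  · simp [hc]

lemma exists_fcw_clique (G : SimpleGraph V) (s : Finset V) :
    ∃ Q ⊆ s, G.IsClique (Q : Set V) ∧ Q.card = fcw G s := by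
  classical
  obtain ⟨Q, hQ, hval⟩ := Finset.exists_mem_eq_sup s.powerset ⟨∅, by simp⟩
    (fun Q : Finset V => if G.IsClique (Q : Set V) then Q.card else 0)
  rw [Finset.mem_powerset] at hQ
  by_cases hc : G.IsClique (Q : Set V)
  · refine ⟨Q, hQ, hc, ?_⟩
    unfold fcw
    rw [hval, if_pos hc]
  · refine ⟨∅, Finset.empty_subset _, by simp, ?_⟩
    unfold fcw
    rw [hval, if_neg hc]
    simp

/-- Any clique of size `k` inside `s'` contains an element of each
color `i < k`, for a proper coloring `f` of `s'` with colors `< k`. -/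
lemma clique_color_surj {G : SimpleGraph V} {s' Q : Finset V} {f : V → ℕ} {k : ℕ}
    (hfcol : ∀ v ∈ s', f v < k)
    (hprop : ∀ v ∈ s', ∀ w ∈ s', G.Adj v w → f v ≠ f w)
    (hQ : Q ⊆ s') (hQc : G.IsClique (Q : Set V)) (hQcard : Q.card = k)
    {i : ℕ} (hi : i < k) : ∃ q ∈ Q, f q = i := by
  classical
  have hinj : Set.InjOn f (Q : Set V) := by
    intro u hu v hv huv
    by_contra hne
    exact hprop u (hQ hu) v (hQ hv) (hQc hu hv hne) huv
  have hcardim : (Q.image f).card = k := by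
    rw [Finset.card_image_of_injOn (by exact_mod_cast hinj), hQcard]
  have hsub : Q.image f ⊆ Finset.range k := by
    intro m hm
    rw [Finset.mem_image] at hm
    obtain ⟨q, hq, rfl⟩ := hm
    exact Finset.mem_range.mpr (hfcol q (hQ hq))
  have : Q.image f = Finset.range k :=
    Finset.eq_of_subset_of_card_le hsub (by rw [hcardim, Finset.card_range])
  have : i ∈ Q.image f := by rw [this]; exact Finset.mem_range.mpr hi
  rw [Finset.mem_image] at this
  obtain ⟨q, hq, hfq⟩ := this
  exact ⟨q, hq, hfq⟩

/-- Dilworth-type theorem: a graph whose complement is transitively ordered by a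
real-valued function admits a clique-number proper coloring on every finset. -/
theorem dilworth_coloring (G : SimpleGraph V) (t : V → ℝ)
    (h1 : ∀ i j, i ≠ j → ¬G.Adj i j → t i ≠ t j)
    (h2 : ∀ i j k, ¬G.Adj i j → ¬G.Adj j k → t i < t j → t j < t k → ¬G.Adj i k) :
    ∀ (n : ℕ) (s : Finset V), s.card ≤ n →
      ∃ f : V → ℕ, (∀ v ∈ s, f v < fcw G s) ∧
        (∀ v ∈ s, ∀ w ∈ s, G.Adj v w → f v ≠ f w) := by
  classical
  intro n
  induction n with
  | zero =>
    intro s hs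
    have : s = ∅ := Finset.card_eq_zero.mp (Nat.le_zero.mp hs)
    subst this
    exact ⟨fun _ => 0, by simp, by simp⟩
  | succ n ih =>
    intro s hs
    rcases s.eq_empty_or_nonempty with rfl | hsne
    · exact ⟨fun _ => 0, by simp, by simp⟩
    -- pick `a` with maximal `t`
    obtain ⟨a, has, hamax⟩ := Finset.exists_max_image s t hsne
    set s' : Finset V := s.erase a with hs'def
    have hs'card : s'.card ≤ n := by
      rw [hs'def, Finset.card_erase_of_mem has]
      omega
    have hs'sub : s' ⊆ s := Finset.erase_subset a s
    rcases s'.eq_empty_or_nonempty with hs'e | hs'ne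
    · -- s = {a}
      have hsa : s = {a} := by
        apply Finset.eq_singleton_iff_unique_mem.mpr
        refine ⟨has, fun v hv => ?_⟩
        by_contra hne
        have : v ∈ s' := Finset.mem_erase.mpr ⟨hne, hv⟩
        simp [hs'e] at this
      refine ⟨fun _ => 0, fun v hv => ?_, fun v hv w hw hadj => ?_⟩
      · beta_reduce
        have h1le : 1 ≤ fcw G s := by
          have hsub : ({a} : Finset V) ⊆ s := fun v hv => by
            rw [hsa]; exact hv
          have := le_fcw (G := G) (Q := {a}) hsub (by simp)
          simpa using this
        omega
      · rw [hsa, Finset.mem_singleton] at hv hw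
        rw [hv, hw] at hadj
        exact absurd hadj (G.loopless.irrefl _)
    -- main case
    set k : ℕ := fcw G s' with hkdef
    have hk1 : 1 ≤ k := by
      obtain ⟨v, hv⟩ := hs'ne
      have := le_fcw (G := G) (Q := {v}) (by simpa using hv) (by simp)
      simpa using this
    obtain ⟨f, hfcol, hfprop⟩ := ih s' hs'card
    rw [← hkdef] at hfcol
    obtain ⟨Qmax, hQmax, hQmaxc, hQmaxcard⟩ := exists_fcw_clique G s'
    rw [← hkdef] at hQmaxcard
    -- the set of vertices of color i that lie in some k-clique of s'
    set A : ℕ → Finset V := fun i => s'.filter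
      (fun v => f v = i ∧ ∃ Q ⊆ s', G.IsClique (Q : Set V) ∧ Q.card = k ∧ v ∈ Q) with hAdef
    have hAne : ∀ i < k, (A i).Nonempty := by
      intro i hi
      obtain ⟨q, hq, hfq⟩ := clique_color_surj hfcol hfprop hQmax hQmaxc hQmaxcard hi
      exact ⟨q, Finset.mem_filter.mpr ⟨hQmax hq, hfq, Qmax, hQmax, hQmaxc, hQmaxcard, hq⟩⟩
    have hai : ∀ i : ℕ, ∃ a', i < k → a' ∈ A i ∧ ∀ v ∈ A i, t v ≤ t a' := by
      intro i
      by_cases hi : i < k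
      · obtain ⟨a', ha', hmax⟩ := Finset.exists_max_image (A i) t (hAne i hi)
        exact ⟨a', fun _ => ⟨ha', hmax⟩⟩
      · exact ⟨a, fun h => absurd h hi⟩
    choose ai hai using hai
    have haiA : ∀ i < k, ai i ∈ A i := fun i hi => (hai i hi).1
    have haimax : ∀ i < k, ∀ v ∈ A i, t v ≤ t (ai i) := fun i hi => (hai i hi).2
    have haimem : ∀ i < k, ai i ∈ s' := fun i hi => Finset.mem_of_mem_filter _ (haiA i hi)
    have haicol : ∀ i < k, f (ai i) = i := fun i hi =>
      (Finset.mem_filter.mp (haiA i hi)).2.1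
    -- key ordered claim
    have keyord : ∀ i < k, ∀ j < k, i ≠ j → ¬G.Adj (ai i) (ai j) →
        t (ai i) < t (ai j) → False := by
      intro i hi j hj hij hnadj htlt
      obtain ⟨-, hQj⟩ := Finset.mem_filter.mp (haiA j hj)
      obtain ⟨-, Qj, hQjs, hQjc, hQjcard, hajQ⟩ := hQj
      obtain ⟨b, hbQ, hfb⟩ := clique_color_surj hfcol hfprop hQjs hQjc hQjcard hi
      have hbA : b ∈ A i := Finset.mem_filter.mpr ⟨hQjs hbQ, hfb, Qj, hQjs, hQjc, hQjcard, hbQ⟩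
      have hble : t b ≤ t (ai i) := haimax i hi b hbA
      by_cases hbeq : b = ai i
      · have haiQ : ai i ∈ Qj := hbeq ▸ hbQ
        have hne : ai i ≠ ai j := fun h =>
          hij (by rw [← haicol i hi, h, haicol j hj])
        exact hnadj (hQjc haiQ hajQ hne)
      · have hbnadj : ¬G.Adj b (ai i) := by
          intro hadj
          exact hfprop b (hQjs hbQ) (ai i) (haimem i hi) hadj (by rw [hfb, haicol i hi])
        have hblt : t b < t (ai i) :=
          lt_of_le_of_ne hble (h1 b (ai i) hbeq hbnadj)
        have : ¬G.Adj b (ai j) := h2 b (ai i) (ai j) hbnadj hnadj hblt htlt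
        have hne : b ≠ ai j := by
          intro h; rw [h, haicol j hj] at hfb; exact hij hfb.symm
        exact this (hQjc hbQ hajQ hne)
    by_cases hcase : ∀ i < k, G.Adj a (ai i)
    · -- Case A: {a} ∪ {ai i} is a (k+1)-clique
      set C : Finset V := insert a ((Finset.range k).image ai) with hCdef
      have hanotin : a ∉ (Finset.range k).image ai := by
        intro h
        rw [Finset.mem_image] at h
        obtain ⟨i, hi, hia⟩ := h
        rw [Finset.mem_range] at hi
        have := haimem i hi
        rw [hia] at this
        exact (Finset.notMem_erase a s) this
      have haiinj : Set.InjOn ai ((Finset.range k : Finset ℕ) : Set ℕ) := by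
        intro i hi j hj hij
        simp only [Finset.coe_range, Set.mem_Iio] at hi hj
        rw [← haicol i hi, ← haicol j hj, hij]
      have hCcard : C.card = k + 1 := by
        rw [hCdef, Finset.card_insert_of_notMem hanotin,
          Finset.card_image_of_injOn haiinj, Finset.card_range]
      have hCclique : G.IsClique (C : Set V) := by
        intro u hu v hv huv
        simp only [hCdef, Finset.coe_insert, Set.mem_insert_iff, Finset.coe_image,
          Finset.coe_range, Set.mem_image, Set.mem_Iio] at hu hv
        rcases hu with rfl | ⟨i, hi, rfl⟩
        · rcases hv with rfl | ⟨j, hj, rfl⟩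
          · exact absurd rfl huv
          · exact hcase j hj
        · rcases hv with rfl | ⟨j, hj, rfl⟩
          · exact (hcase i hi).symm
          · have hij : i ≠ j := by
              intro h; rw [h] at huv; exact huv rfl
            by_contra hnadj
            have hnadj' : ¬G.Adj (ai j) (ai i) := fun h => hnadj h.symm
            have htne : t (ai i) ≠ t (ai j) := h1 _ _ huv hnadj
            rcases lt_or_gt_of_ne htne with h | h
            · exact keyord i hi j hj hij hnadj h
            · exact keyord j hj i hi (Ne.symm hij) hnadj' h
      have hCs : C ⊆ s := by
        intro v hv
        rw [hCdef, Finset.mem_insert] at hv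
        rcases hv with rfl | hv
        · exact has
        · rw [Finset.mem_image] at hv
          obtain ⟨i, hi, rfl⟩ := hv
          exact hs'sub (haimem i (Finset.mem_range.mp hi))
      have hwk1 : k + 1 ≤ fcw G s := by
        have := le_fcw hCs hCclique
        rwa [hCcard] at this
      refine ⟨fun v => if v = a then k else f v, fun v hv => ?_, ?_⟩
      · beta_reduce
        by_cases hva : v = a
        · rw [if_pos hva]; omega
        · rw [if_neg hva]
          have hv' : v ∈ s' := Finset.mem_erase.mpr ⟨hva, hv⟩
          have := hfcol v hv'
          omega
      · intro v hv w hw hadj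
        beta_reduce
        by_cases hva : v = a
        · have hwa : w ≠ a := fun h => by
            rw [h, hva] at hadj; exact G.loopless.irrefl _ hadj
          rw [if_pos hva, if_neg hwa]
          have := hfcol w (Finset.mem_erase.mpr ⟨hwa, hw⟩)
          omega
        · by_cases hwa : w = a
          · rw [if_neg hva, if_pos hwa]
            have := hfcol v (Finset.mem_erase.mpr ⟨hva, hv⟩)
            omega
          · rw [if_neg hva, if_neg hwa]
            exact hfprop v (Finset.mem_erase.mpr ⟨hva, hv⟩)
              w (Finset.mem_erase.mpr ⟨hwa, hw⟩) hadj
    · -- Case B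
      push_neg at hcase
      obtain ⟨i, hik, hnadj⟩ := hcase
      set α := ai i with hαdef
      have hαs' : α ∈ s' := haimem i hik
      have hαne : α ≠ a := Finset.ne_of_mem_erase hαs'
      have hnadja : ¬G.Adj α a := fun h => hnadj h.symm
      have htαa : t α < t a :=
        lt_of_le_of_ne (hamax α (hs'sub hαs')) (h1 α a hαne hnadja)
      set K : Finset V := insert a (s'.filter fun v => f v = i ∧ t v ≤ t α) with hKdef
      have haK : a ∈ K := Finset.mem_insert_self a _
      have hKs : K ⊆ s := by
        intro v hv
        rw [hKdef, Finset.mem_insert] at hv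
        rcases hv with rfl | hv
        · exact has
        · exact hs'sub (Finset.mem_of_mem_filter _ hv)
      -- non-adjacency of a to elements of the filter
      have hKanadj : ∀ v ∈ s'.filter (fun v => f v = i ∧ t v ≤ t α), ¬G.Adj a v := by
        intro v hv
        obtain ⟨hvs', hfv, hvle⟩ := Finset.mem_filter.mp hv
        by_cases hveq : v = α
        · subst hveq; exact hnadj
        · have hvnadjα : ¬G.Adj v α := by
            intro hadj
            exact hfprop v hvs' α hαs' hadj (by rw [hfv, hαdef, haicol i hik])
          have hvlt : t v < t α := lt_of_le_of_ne hvle (h1 v α hveq hvnadjα)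
          intro hadj
          exact h2 v α a hvnadjα hnadja hvlt htαa hadj.symm
      have hKind : ∀ v ∈ K, ∀ w ∈ K, v ≠ w → ¬G.Adj v w := by
        intro v hv w hw hvw
        rw [hKdef, Finset.mem_insert] at hv hw
        rcases hv with rfl | hv
        · rcases hw with rfl | hw
          · exact absurd rfl hvw
          · exact hKanadj w hw
        · rcases hw with rfl | hw
          · intro h; exact hKanadj v hv h.symm
          · obtain ⟨hvs', hfv, -⟩ := Finset.mem_filter.mp hv
            obtain ⟨hws', hfw, -⟩ := Finset.mem_filter.mp hw
            intro hadj
            exact hfprop v hvs' w hws' hadj (by rw [hfv, hfw])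
      set s'' : Finset V := s \ K with hs''def
      have hs''s' : s'' ⊆ s' := by
        intro v hv
        rw [hs''def, Finset.mem_sdiff] at hv
        refine Finset.mem_erase.mpr ⟨?_, hv.1⟩
        intro h; rw [h] at hv; exact hv.2 haK
      have hs''card : s''.card ≤ n := (Finset.card_le_card hs''s').trans hs'card
      -- fcw of s'' is < k
      have hk''lt : fcw G s'' < k := by
        rcases lt_or_ge (fcw G s'') k with h | h
        · exact h
        · exfalso
          obtain ⟨Q, hQ, hQc, hQcard⟩ := exists_fcw_clique G s''
          have hQs' : Q ⊆ s' := hQ.trans hs''s'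
          have hkub : fcw G s'' ≤ k := fcw_mono hs''s'
          have hQk : Q.card = k := by omega
          obtain ⟨q, hqQ, hfq⟩ := clique_color_surj hfcol hfprop hQs' hQc hQk hik
          have hqA : q ∈ A i := Finset.mem_filter.mpr ⟨hQs' hqQ, hfq, Q, hQs', hQc, hQk, hqQ⟩
          have hqle : t q ≤ t α := haimax i hik q hqA
          have hqK : q ∈ K := by
            rw [hKdef, Finset.mem_insert]
            exact Or.inr (Finset.mem_filter.mpr ⟨hQs' hqQ, hfq, hqle⟩)
          have := hQ hqQ
          rw [hs''def, Finset.mem_sdiff] at this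
          exact this.2 hqK
      obtain ⟨g, hgcol, hgprop⟩ := ih s'' hs''card
      have hkle : fcw G s' ≤ fcw G s := fcw_mono hs'sub
      refine ⟨fun v => if v ∈ K then k - 1 else g v, fun v hv => ?_, ?_⟩
      · beta_reduce
        by_cases hvK : v ∈ K
        · rw [if_pos hvK]; omega
        · rw [if_neg hvK]
          have hv'' : v ∈ s'' := Finset.mem_sdiff.mpr ⟨hv, hvK⟩
          have := hgcol v hv''
          have hle : fcw G s'' ≤ fcw G s := fcw_mono (Finset.sdiff_subset)
          omega
      · intro v hv w hw hadj
        beta_reduce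
        by_cases hvK : v ∈ K
        · by_cases hwK : w ∈ K
          · exact absurd hadj (hKind v hvK w hwK hadj.ne)
          · rw [if_pos hvK, if_neg hwK]
            have := hgcol w (Finset.mem_sdiff.mpr ⟨hw, hwK⟩)
            omega
        · by_cases hwK : w ∈ K
          · rw [if_neg hvK, if_pos hwK]
            have := hgcol v (Finset.mem_sdiff.mpr ⟨hv, hvK⟩)
            omega
          · rw [if_neg hvK, if_neg hwK]
            exact hgprop v (Finset.mem_sdiff.mpr ⟨hv, hvK⟩)
              w (Finset.mem_sdiff.mpr ⟨hw, hwK⟩) hadj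
theorem chrom_eq_cliqueNum {V : Type*} [Fintype V] [DecidableEq V]
    (G : SimpleGraph V) (t : V → ℝ)
    (h1 : ∀ i j, i ≠ j → ¬G.Adj i j → t i ≠ t j)
    (h2 : ∀ i j k, ¬G.Adj i j → ¬G.Adj j k → t i < t j → t j < t k → ¬G.Adj i k) :
    G.chromaticNumber = (G.cliqueNum : ℕ∞) := by
  classical
  obtain ⟨f, hfcol, hfprop⟩ :=
    dilworth_coloring G t h1 h2 (Finset.univ.card) Finset.univ le_rfl
  -- fcw of univ ≤ cliqueNum
  have hfcwle : fcw G Finset.univ ≤ G.cliqueNum := by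
    obtain ⟨Q, hQs, hQc, hQcard⟩ := exists_fcw_clique G Finset.univ
    rw [← hQcard]
    exact IsClique.card_le_cliqueNum (tc := hQc)
  -- colorable with fcw colors
  have hcolorable : G.Colorable (fcw G Finset.univ) := by
    refine ⟨SimpleGraph.Coloring.mk
      (fun v => ⟨f v, hfcol v (Finset.mem_univ v)⟩) ?_⟩
    intro v w hadj
    simp only [ne_eq, Fin.mk.injEq]
    exact hfprop v (Finset.mem_univ v) w (Finset.mem_univ w) hadj
  apply le_antisymm
  · calc G.chromaticNumber ≤ (fcw G Finset.univ : ℕ∞) :=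
          hcolorable.chromaticNumber_le
    _ ≤ (G.cliqueNum : ℕ∞) := by exact_mod_cast hfcwle
  · obtain ⟨Q, hQ⟩ := G.exists_isNClique_cliqueNum
    have := hQ.isClique.card_le_chromaticNumber
    rwa [hQ.card_eq] at this

end DilworthMachinery

open scoped RealInnerProductSpace

section Geom

variable {d : ℕ}

local notation "E" => EuclideanSpace ℝ (Fin d)

lemma decomp (υ : E) (hυ : ‖υ‖ = 1) (u w : E) (hw : ⟪υ, w⟫ = 0) (c : ℝ)
    (hu : u = c • υ + w) : ‖u‖ ^ 2 = c ^ 2 + ‖w‖ ^ 2 := by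
  subst hu
  rw [norm_add_sq_real]
  have h1 : ‖c • υ‖ = |c| := by rw [norm_smul, hυ, Real.norm_eq_abs, mul_one]
  have h2 : ⟪c • υ, w⟫ = 0 := by rw [real_inner_smul_left, hw, mul_zero]
  rw [h1, h2, sq_abs]
  ring

lemma perp_le (υ b y : E) (hυ : ‖υ‖ = 1) (L : Set E)
    (hL : L = Set.range (fun t : ℝ => t • υ + b))
    (hd : Metric.infDist y L ≤ Real.sqrt 3 / 4) :
    ‖y - b - ⟪y - b, υ⟫ • υ‖ ≤ Real.sqrt 3 / 4 := by
  set r : E := y - b - ⟪y - b, υ⟫ • υ with hrdef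
  have hro : ⟪υ, r⟫ = 0 := by
    rw [hrdef, inner_sub_right, inner_smul_right, real_inner_self_eq_norm_sq, hυ,
      real_inner_comm]
    ring
  by_contra hcon
  push_neg at hcon
  have hLne : L.Nonempty := ⟨b, by rw [hL]; exact ⟨0, by simp⟩⟩
  have hlt : Metric.infDist y L < ‖r‖ := lt_of_le_of_lt hd hcon
  obtain ⟨z, hz, hzd⟩ := (Metric.infDist_lt_iff hLne).mp hlt
  rw [hL] at hz
  obtain ⟨c, rfl⟩ := hz
  have hdist : dist y (c • υ + b) = ‖y - (c • υ + b)‖ := dist_eq_norm _ _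
  have hexp : y - (c • υ + b) = (⟪y - b, υ⟫ - c) • υ + r := by
    rw [hrdef]; module
  have hsq : ‖y - (c • υ + b)‖ ^ 2 = (⟪y - b, υ⟫ - c) ^ 2 + ‖r‖ ^ 2 :=
    decomp υ hυ _ r hro _ hexp
  rw [hdist] at hzd
  nlinarith [norm_nonneg (y - (c • υ + b)), norm_nonneg r,
    sq_nonneg (⟪y - b, υ⟫ - c)]

end Geom

section Main

open scoped RealInnerProductSpace

/-- The distance graph of a sequence of points: indices `i ≠ j` are adjacent
when the corresponding points are at distance `< 1`. -/
def distGraph {E : Type*} [NormedAddCommGroup E] {N : ℕ} (x : Fin N → E) :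
    SimpleGraph (Fin N) where
  Adj i j := i ≠ j ∧ ‖x i - x j‖ < 1
  symm := by
    constructor
    intro i j ⟨hij, hd⟩
    exact ⟨hij.symm, by rwa [norm_sub_rev]⟩
  loopless := by constructor; intro i ⟨h, _⟩; exact h rfl

/-- A finite graph is perfect if for every induced subgraph the chromatic number
equals the clique number. -/
def IsPerfect {V : Type*} [Fintype V] (G : SimpleGraph V) : Prop :=
  ∀ s : Set V, (G.induce s).chromaticNumber = ((G.induce s).cliqueNum : ℕ∞)

theorem distGraph_isPerfect
    (d N : ℕ) (x : Fin N → EuclideanSpace ℝ (Fin d))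
    (υ b : EuclideanSpace ℝ (Fin d)) (hυ : ‖υ‖ = 1)
    (L : Set (EuclideanSpace ℝ (Fin d)))
    (hL : L = Set.range (fun t : ℝ => t • υ + b))
    (hx : ∀ i, Metric.infDist (x i) L ≤ Real.sqrt 3 / 4) :
    IsPerfect (distGraph x) := by
  classical
  -- projection onto the line direction
  set t : Fin N → ℝ := fun i => ⟪x i, υ⟫ with htdef
  -- orthogonal components
  set r : Fin N → EuclideanSpace ℝ (Fin d) :=
    fun i => x i - b - ⟪x i - b, υ⟫ • υ with hrdef
  have hro : ∀ i, ⟪υ, r i⟫ = 0 := by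
    intro i
    rw [hrdef]
    simp only
    rw [inner_sub_right, inner_smul_right, real_inner_self_eq_norm_sq, hυ,
      real_inner_comm]
    ring
  have hrle : ∀ i, ‖r i‖ ≤ Real.sqrt 3 / 4 := fun i =>
    perp_le υ b (x i) hυ L hL (hx i)
  have hnormsq : ∀ i j, ‖x i - x j‖ ^ 2 = (t i - t j) ^ 2 + ‖r i - r j‖ ^ 2 := by
    intro i j
    refine decomp υ hυ _ _ ?_ _ ?_
    · rw [inner_sub_right, hro i, hro j]; ring
    · have hscal : t i - t j = ⟪x i - b, υ⟫ - ⟪x j - b, υ⟫ := by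
        rw [htdef]
        simp only [inner_sub_left]
        ring
      rw [hscal, hrdef]
      module
  have hrrsq : ∀ i j, ‖r i - r j‖ ^ 2 ≤ 3 / 4 := by
    intro i j
    have h1 : ‖r i - r j‖ ≤ ‖r i‖ + ‖r j‖ := norm_sub_le _ _
    have h2 : Real.sqrt 3 ^ 2 = 3 := Real.sq_sqrt (by norm_num)
    nlinarith [hrle i, hrle j, norm_nonneg (r i - r j), norm_nonneg (r i),
      norm_nonneg (r j), Real.sqrt_nonneg 3]
  have key1 : ∀ i j, 1 ≤ ‖x i - x j‖ → 1 / 2 ≤ |t i - t j| := by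
    intro i j h
    have hsq := hnormsq i j
    have habs : |t i - t j| ^ 2 = (t i - t j) ^ 2 := sq_abs _
    nlinarith [hrrsq i j, abs_nonneg (t i - t j), norm_nonneg (x i - x j)]
  have key2 : ∀ i j, 1 ≤ |t i - t j| → 1 ≤ ‖x i - x j‖ := by
    intro i j h
    have hsq := hnormsq i j
    have habs : |t i - t j| ^ 2 = (t i - t j) ^ 2 := sq_abs _
    nlinarith [abs_nonneg (t i - t j), norm_nonneg (x i - x j),
      norm_nonneg (r i - r j), sq_nonneg (‖r i - r j‖)]
  intro s
  haveI : Fintype ↥s := Fintype.ofFinite _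
  have hadj_iff : ∀ v w : ↥s, ((distGraph x).induce s).Adj v w ↔
      ((v : Fin N) ≠ (w : Fin N) ∧ ‖x v - x w‖ < 1) := fun v w => Iff.rfl
  apply chrom_eq_cliqueNum _ (fun v : ↥s => t ↑v)
  · -- h1
    intro v w hvw hnadj
    have hcoe : (v : Fin N) ≠ (w : Fin N) := fun h => hvw (Subtype.ext h)
    have hge : 1 ≤ ‖x v - x w‖ := by
      by_contra hlt
      push_neg at hlt
      exact hnadj ((hadj_iff v w).mpr ⟨hcoe, hlt⟩)
    have := key1 _ _ hge
    intro heq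
    rw [show t ↑v = t ↑w from heq, sub_self, abs_zero] at this
    linarith
  · -- h2
    intro u v w hnuv hnvw htuv htvw
    have hcuv : (u : Fin N) ≠ (v : Fin N) := fun h => by
      rw [show t ↑u = t ↑v from congrArg t h] at htuv; exact lt_irrefl _ htuv
    have hcvw : (v : Fin N) ≠ (w : Fin N) := fun h => by
      rw [show t ↑v = t ↑w from congrArg t h] at htvw; exact lt_irrefl _ htvw
    have hguv : 1 ≤ ‖x u - x v‖ := by
      by_contra hlt
      push_neg at hlt
      exact hnuv ((hadj_iff u v).mpr ⟨hcuv, hlt⟩)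
    have hgvw : 1 ≤ ‖x v - x w‖ := by
      by_contra hlt
      push_neg at hlt
      exact hnvw ((hadj_iff v w).mpr ⟨hcvw, hlt⟩)
    have h1 := key1 _ _ hguv
    have h2 := key1 _ _ hgvw
    rw [abs_sub_comm, abs_of_pos (by linarith)] at h1
    rw [abs_sub_comm, abs_of_pos (by linarith)] at h2
    have : 1 ≤ |t ↑u - t ↑w| := by
      rw [abs_sub_comm, abs_of_pos (by linarith)]
      linarith
    have hgw := key2 _ _ this
    intro hadj
    have := (hadj_iff u w).mp hadj
    linarith [this.2]

end Main
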